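/- Let m ≥ 2 and let C be a Type II Z_{2^m}-code of length n with a generator matrix G in standard form of type (k_1,…,k_m); set K = k_1+⋯+k_m. Let w ∈ (Z/2^m)^n \ C be a vector all of whose coordinates lie in {0, 2^{m−1}}, which is zero on the first K coordinates, and with n_{2^{m−1}}(w) even in case m = 2. Then the code C̃ = {v ∈ C : ⟨w,v⟩ = 0} + ⟨w⟩ is of type (k_1−1, k_2+2) if m = 2; of type (k_1−1, k_2+1, k_3+1) if m = 3; and of type (k_1−1, k_2+1, k_3, …, k_{m−1}, k_m+1) if m ≥ 4. Equivalently, C̃ is isomorphic as an abelian group to (Z/4)^{k_1−1} × (Z/2)^{k_2+2} if m = 2, to (Z/8)^{k_1−1} × (Z/4)^{k_2+1} × (Z/2)^{k_3+1} if m = 3, and to (Z/2^m)^{k_1−1} × (Z/2^{m−1})^{k_2+1} × (∏_{j=3}^{m−1} (Z/2^{m−j+1})^{k_j}) × (Z/2)^{k_m+1} if m ≥ 4. -/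

import Mathlib

open Finset

/-- Inner product of two vectors over `ZMod N`. -/
def innerZ {N n : ℕ} (x y : Fin n → ZMod N) : ZMod N := ∑ i, x i * y i

/-- Euclidean weight of a vector over `ZMod N`. -/
def euclWt {N n : ℕ} (x : Fin n → ZMod N) : ℕ :=
  ∑ i, min ((x i).val ^ 2) ((N - (x i).val) ^ 2)

/-- Number of coordinates of `x` equal to `a`. -/
def cntEq {N n : ℕ} (a : ZMod N) (x : Fin n → ZMod N) : ℕ :=
  (Finset.univ.filter fun j => x j = a).card

/-- A code is self-dual if it equals its dual. -/
def IsSelfDual {N n : ℕ} (C : AddSubgroup (Fin n → ZMod N)) : Prop :=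
  ∀ x, x ∈ C ↔ ∀ y ∈ C, innerZ x y = 0

/-- The subcode `{v ∈ C : ⟨w, v⟩ = 0}`. -/
def evenPart {N n : ℕ} (C : AddSubgroup (Fin n → ZMod N)) (w : Fin n → ZMod N) :
    AddSubgroup (Fin n → ZMod N) where
  carrier := {v | v ∈ C ∧ innerZ w v = 0}
  zero_mem' := ⟨C.zero_mem, by simp [innerZ]⟩
  add_mem' := by
    rintro a b ⟨ha, ha0⟩ ⟨hb, hb0⟩
    refine ⟨C.add_mem ha hb, ?_⟩
    have h : innerZ w (a + b) = innerZ w a + innerZ w b := by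
      simp [innerZ, mul_add, Finset.sum_add_distrib]
    rw [h, ha0, hb0, add_zero]
  neg_mem' := by
    rintro a ⟨ha, ha0⟩
    refine ⟨C.neg_mem ha, ?_⟩
    have h : innerZ w (-a) = - innerZ w a := by
      simp [innerZ]
    rw [h, ha0, neg_zero]

/-- `kv` extended to all of `ℕ` by zero. -/
def extk {m : ℕ} (kv : Fin m → ℕ) : ℕ → ℕ := fun t => if h : t < m then kv ⟨t, h⟩ else 0

/-- Partial sums `k_1 + ⋯ + k_j`. -/
def psum {m : ℕ} (kv : Fin m → ℕ) (j : ℕ) : ℕ := ∑ t ∈ Finset.range j, extk kv t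

/-- `G` is a generator matrix in standard form of type `(k_1, …, k_m)`. -/
def StandardForm {N : ℕ} {m n : ℕ} (kv : Fin m → ℕ)
    (G : Fin (psum kv m) → Fin n → ZMod N) : Prop :=
  psum kv m ≤ n ∧
  ∀ (j : Fin m) (r : Fin (psum kv m)), psum kv (j : ℕ) ≤ (r : ℕ) → (r : ℕ) < psum kv ((j : ℕ) + 1) →
    ∀ c : Fin n,
      (∀ l : Fin m, psum kv (l : ℕ) ≤ (c : ℕ) → (c : ℕ) < psum kv ((l : ℕ) + 1) →
        (l < j → G r c = 0) ∧
        (l = j → G r c = if (r : ℕ) = (c : ℕ) then (2 ^ (j : ℕ) : ZMod N) else 0)) ∧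
      ((psum kv m ≤ (c : ℕ) ∨
        ∃ l : Fin m, j < l ∧ psum kv (l : ℕ) ≤ (c : ℕ) ∧ (c : ℕ) < psum kv ((l : ℕ) + 1)) →
        ∃ a : ZMod N, G r c = 2 ^ (j : ℕ) * a)

/-- The minimum Euclidean weight over nonzero codewords equals `d`. -/
def minEuclWtIs {N n : ℕ} (C : AddSubgroup (Fin n → ZMod N)) (d : ℕ) : Prop :=
  (∀ x ∈ C, x ≠ 0 → d ≤ euclWt x) ∧ ∃ x ∈ C, x ≠ 0 ∧ euclWt x = d

/-- Coordinatewise reduction modulo 4. -/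
def res4 {n : ℕ} : (Fin n → ZMod 8) →+ (Fin n → ZMod 4) where
  toFun := fun x i => ZMod.castHom (by norm_num : (4 : ℕ) ∣ 8) (ZMod 4) (x i)
  map_zero' := by ext i; simp
  map_add' := by intro a b; ext i; exact map_add (ZMod.castHom (by norm_num) _) _ _

/-- Coordinatewise reduction modulo 2. -/
def res2 {n : ℕ} : (Fin n → ZMod 8) →+ (Fin n → ZMod 2) where
  toFun := fun x i => ZMod.castHom (by norm_num : (2 : ℕ) ∣ 8) (ZMod 2) (x i)
  map_zero' := by ext i; simp
  map_add' := by intro a b; ext i; exact map_add (ZMod.castHom (by norm_num) _) _ _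

/-- Hamming weight of a binary vector. -/
def hammingWt {n : ℕ} (y : Fin n → ZMod 2) : ℕ :=
  (Finset.univ.filter fun i => y i ≠ 0).card

/-- Equivalence of codes: a permutation of coordinates combined with sign changes. -/
def codeEquiv {N n : ℕ} (C C' : AddSubgroup (Fin n → ZMod N)) : Prop :=
  ∃ (σ : Equiv.Perm (Fin n)) (ε : Fin n → ZMod N),
    (∀ i, ε i = 1 ∨ ε i = -1) ∧
    ∀ y, y ∈ C' ↔ ∃ x ∈ C, y = fun i => ε i * x (σ i)

namespace Doubling
variable {m n : ℕ} (kv : Fin m → ℕ)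

lemma extk_coe (j : Fin m) : extk kv (j : ℕ) = kv j := by
  simp [extk, j.2]

lemma psum_succ (j : ℕ) : psum kv (j + 1) = psum kv j + extk kv j :=
  Finset.sum_range_succ _ _

lemma psum_mono : Monotone (psum kv) := fun _ _ h =>
  Finset.sum_le_sum_of_subset (Finset.range_subset_range.2 h)

lemma psum_zero : psum kv 0 = 0 := by simp [psum]

lemma exists_block : ∀ M, M ≤ m → ∀ c : ℕ, c < psum kv M →
    ∃ l : Fin m, psum kv (l : ℕ) ≤ c ∧ c < psum kv ((l : ℕ) + 1) := by
  intro M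
  induction M with
  | zero => intro _ c hc; simp [psum_zero] at hc
  | succ M ih =>
    intro hM c hc
    by_cases h : psum kv M ≤ c
    · exact ⟨⟨M, hM⟩, h, hc⟩
    · exact ih (by omega) c (by omega)

def rowIdxN (j t : ℕ) (hj : j < m) (ht : t < extk kv j) : Fin (psum kv m) :=
  ⟨psum kv j + t, by
    have h1 := psum_succ kv j
    have h2 : psum kv (j + 1) ≤ psum kv m := psum_mono kv hj
    omega⟩

variable {N : ℕ} {G : Fin (psum kv m) → Fin n → ZMod N}

section entries
variable (hSF : StandardForm kv G) {j t : ℕ} (hj : j < m) (ht : t < extk kv j)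

lemma row_mem_block : psum kv j ≤ (rowIdxN kv j t hj ht : ℕ) ∧
    (rowIdxN kv j t hj ht : ℕ) < psum kv (j + 1) := by
  constructor
  · exact Nat.le_add_right _ _
  · have := psum_succ kv j; simp [rowIdxN]; omega

include hSF

lemma G_entry_lt (c : Fin n) (hc : (c : ℕ) < psum kv j) :
    G (rowIdxN kv j t hj ht) c = 0 := by
  obtain ⟨l, hl1, hl2⟩ := exists_block kv j (le_of_lt hj) c hc
  have hlj : (l : ℕ) < j := by
    by_contra h
    have := psum_mono kv (show j ≤ (l : ℕ) by omega)
    omega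
  have h := (hSF.2 ⟨j, hj⟩ _ (row_mem_block kv hj ht).1 (row_mem_block kv hj ht).2 c).1 l hl1 hl2
  exact h.1 hlj

lemma G_entry_diag (c : Fin n) (h1 : psum kv j ≤ (c : ℕ)) (h2 : (c : ℕ) < psum kv (j + 1)) :
    G (rowIdxN kv j t hj ht) c = if psum kv j + t = (c : ℕ) then (2 ^ j : ZMod N) else 0 := by
  have h := (hSF.2 ⟨j, hj⟩ _ (row_mem_block kv hj ht).1 (row_mem_block kv hj ht).2 c).1 ⟨j, hj⟩ h1 h2
  exact h.2 rfl

lemma G_entry_ge (c : Fin n) (hc : psum kv (j + 1) ≤ (c : ℕ)) :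
    ∃ a, G (rowIdxN kv j t hj ht) c = 2 ^ j * a := by
  have h := (hSF.2 ⟨j, hj⟩ _ (row_mem_block kv hj ht).1 (row_mem_block kv hj ht).2 c).2
  apply h
  by_cases hcm : psum kv m ≤ (c : ℕ)
  · exact Or.inl hcm
  · obtain ⟨l, hl1, hl2⟩ := exists_block kv m le_rfl c (by omega)
    refine Or.inr ⟨l, ?_, hl1, hl2⟩
    show j < (l : ℕ)
    by_contra h'
    have := psum_mono kv (show (l : ℕ) + 1 ≤ j + 1 by omega)
    omega

lemma G_entry_dvd (c : Fin n) : ∃ a, G (rowIdxN kv j t hj ht) c = 2 ^ j * a := by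
  rcases lt_or_ge (c : ℕ) (psum kv j) with h | h
  · exact ⟨0, by rw [G_entry_lt kv hSF hj ht c h, mul_zero]⟩
  · rcases lt_or_ge (c : ℕ) (psum kv (j + 1)) with h2 | h2
    · rw [G_entry_diag kv hSF hj ht c h h2]
      split
      · exact ⟨1, (mul_one _).symm⟩
      · exact ⟨0, (mul_zero _).symm⟩
    · exact G_entry_ge kv hSF hj ht c h2

end entries
end Doubling

namespace Doubling
section main
variable {m n : ℕ} (kv : Fin m → ℕ) (G : Fin (psum kv m) → Fin n → ZMod (2 ^ m))
  (w : Fin n → ZMod (2 ^ m)) (r0 : ℕ)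

/-- Sizes of the blocks of the new code. -/
def sz (j : Fin m) : ℕ :=
  kv j - (if (j : ℕ) = 0 then 1 else 0) + (if (j : ℕ) = 1 then 1 else 0)
    + (if (j : ℕ) = m - 1 then 1 else 0)

/-- innerZ as an additive hom in the second variable. -/
def innerHom : (Fin n → ZMod (2 ^ m)) →+ ZMod (2 ^ m) where
  toFun v := innerZ w v
  map_zero' := by simp [innerZ]
  map_add' a b := by simp [innerZ, mul_add, Finset.sum_add_distrib]

/-- 0/1 coefficient recording whether row `t` of block 0 pairs nontrivially with `w`. -/
def eps (hm : 0 < m) (t : ℕ) : ℤ :=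
  if ht : t < extk kv 0 then
    (if innerZ w (G (rowIdxN kv 0 t hm ht)) = 0 then 0 else 1)
  else 0

/-- Generators of the doubled code. -/
def gen (hm : 2 ≤ m) (hr0 : r0 < extk kv 0) (j : Fin m) (t : Fin (sz kv j)) :
    Fin n → ZMod (2 ^ m) :=
  if _h0 : (j : ℕ) = 0 then
    (if hs : (if (t : ℕ) < r0 then (t : ℕ) else (t : ℕ) + 1) < extk kv 0 then
      G (rowIdxN kv 0 _ (by omega) hs)
        - eps kv G w (by omega) (if (t : ℕ) < r0 then (t : ℕ) else (t : ℕ) + 1)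
          • G (rowIdxN kv 0 r0 (by omega) hr0)
    else 0)
  else if ht : (t : ℕ) < extk kv (j : ℕ) then G (rowIdxN kv (j : ℕ) (t : ℕ) j.2 ht)
  else if (t : ℕ) = extk kv (j : ℕ) ∧ (j : ℕ) = 1 then
    (2 : ℤ) • G (rowIdxN kv 0 r0 (by omega) hr0)
  else w

variable (hm : 2 ≤ m) (hr0 : r0 < extk kv 0)

/-- The candidate isomorphism, as a raw function. -/
def ThetaFun (x : ∀ j : Fin m, Fin (sz kv j) → ZMod (2 ^ (m - (j : ℕ)))) :
    Fin n → ZMod (2 ^ m) :=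
  ∑ j, ∑ t, ((x j t).val : ℤ) • gen kv G w r0 hm hr0 j t

end main
end Doubling
namespace Doubling
section helpers
variable {m : ℕ}

lemma pow2m_zero : ((2 : ZMod (2 ^ m)) ^ m) = 0 := by
  have := ZMod.natCast_self (2 ^ m)
  push_cast at this
  exact this

/-- Kill a term whose coefficient is divisible by `2^(m-l)` and whose entry is `2^l * a`. -/
lemma term_zero {l : ℕ} (hl : l ≤ m) {cc : ℤ} (hc : (2 : ℤ) ^ (m - l) ∣ cc)
    {x a : ZMod (2 ^ m)} (hx : x = 2 ^ l * a) : cc • x = 0 := by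
  obtain ⟨k, rfl⟩ := hc
  rw [hx, zsmul_eq_mul]
  push_cast
  have : ((2 : ZMod (2 ^ m)) ^ (m - l) * 2 ^ l) = 0 := by
    rw [← pow_add, Nat.sub_add_cancel hl, pow2m_zero]
  calc (2 : ZMod (2 ^ m)) ^ (m - l) * k * (2 ^ l * a)
      = ((2 : ZMod (2 ^ m)) ^ (m - l) * 2 ^ l) * (k * a) := by ring
    _ = 0 := by rw [this, zero_mul]

/-- Extract divisibility of the coefficient from the vanishing of a diagonal term. -/
lemma coeff_dvd {l : ℕ} (hl : l ≤ m) {cc : ℤ}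
    (h : cc • ((2 : ZMod (2 ^ m)) ^ l) = 0) : (2 : ℤ) ^ (m - l) ∣ cc := by
  rw [zsmul_eq_mul] at h
  have h2 : ((cc * 2 ^ l : ℤ) : ZMod (2 ^ m)) = 0 := by push_cast; exact h
  rw [ZMod.intCast_zmod_eq_zero_iff_dvd] at h2
  have h3 : (2 : ℤ) ^ (m - l) * 2 ^ l ∣ cc * 2 ^ l := by
    have : ((2 ^ m : ℕ) : ℤ) = (2 : ℤ) ^ (m - l) * 2 ^ l := by
      push_cast
      rw [← pow_add, Nat.sub_add_cancel hl]
    rwa [this] at h2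
  exact (mul_dvd_mul_iff_right (by positivity : (2 : ℤ) ^ l ≠ 0)).mp h3

lemma val_smul_add {q : ℕ} (hq : q ≠ 0) {V : Type*} [AddCommGroup V] (g : V)
    (hg : (q : ℤ) • g = 0) (a b : ZMod q) :
    (((a + b).val : ℤ)) • g = ((a.val : ℤ)) • g + ((b.val : ℤ)) • g := by
  haveI : NeZero q := ⟨hq⟩
  have h := ZMod.val_add a b
  have h2 := Nat.div_add_mod (a.val + b.val) q
  have keyN : a.val + b.val = q * ((a.val + b.val) / q) + (a + b).val := by omega
  have key : ((a.val : ℤ) + (b.val : ℤ)) =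
      (q : ℤ) * (((a.val + b.val) / q : ℕ) : ℤ) + ((a + b).val : ℤ) := by
    exact_mod_cast congrArg (Nat.cast : ℕ → ℤ) keyN
  rw [← add_smul, key, add_smul, mul_comm, mul_smul, hg, smul_zero, zero_add]

lemma two_torsion (hm : 0 < m) (x : ZMod (2 ^ m)) (h : (2 : ZMod (2 ^ m)) * x = 0) :
    x = 0 ∨ x = 2 ^ (m - 1) := by
  have hx : x = ((x.val : ℕ) : ZMod (2 ^ m)) := by
    haveI : NeZero (2 ^ m) := ⟨by positivity⟩
    simp [ZMod.natCast_val, ZMod.cast_id]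
  have hlt : x.val < 2 ^ m := ZMod.val_lt x
  have h2 : ((2 * x.val : ℕ) : ZMod (2 ^ m)) = 0 := by push_cast; rw [← hx]; exact h
  rw [ZMod.natCast_eq_zero_iff] at h2
  have hsplit : 2 ^ m = 2 * 2 ^ (m - 1) := by
    conv_lhs => rw [show m = 1 + (m - 1) by omega]
    rw [pow_add, pow_one]
  obtain ⟨k, hk⟩ := h2
  have hk' : x.val = 2 ^ (m - 1) * k := by
    refine Nat.eq_of_mul_eq_mul_left (show 0 < 2 by norm_num) ?_
    calc 2 * x.val = 2 ^ m * k := hk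
      _ = 2 * (2 ^ (m - 1) * k) := by rw [hsplit]; ring
  have hk2 : k < 2 := by nlinarith [pow_pos (show 0 < 2 by norm_num) (m - 1), hlt, hsplit]
  interval_cases k
  · left; rw [hx, hk']; simp
  · right; rw [hx, hk']; push_cast; ring
end helpers
end Doubling

namespace Doubling
section main2
variable {m n : ℕ} (kv : Fin m → ℕ) (G : Fin (psum kv m) → Fin n → ZMod (2 ^ m))
  (w : Fin n → ZMod (2 ^ m)) (r0 : ℕ)

lemma sz_zero (hm : 2 ≤ m) (j : Fin m) (h0 : (j : ℕ) = 0) : sz kv j = kv j - 1 := by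
  have h2 : ¬((0 : ℕ) = m - 1) := by omega
  simp [sz, h0, h2]

lemma sz_pos' (j : Fin m) (h0 : (j : ℕ) ≠ 0) :
    sz kv j = kv j + (if (j : ℕ) = 1 then 1 else 0) + (if (j : ℕ) = m - 1 then 1 else 0) := by
  simp [sz, h0]

variable (hm : 2 ≤ m) (hr0 : r0 < extk kv 0)

lemma gen_def0 (j : Fin m) (h0 : (j : ℕ) = 0) (t : Fin (sz kv j))
    (hs : (if (t : ℕ) < r0 then (t : ℕ) else (t : ℕ) + 1) < extk kv 0) :
    gen kv G w r0 hm hr0 j t =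
      G (rowIdxN kv 0 (if (t : ℕ) < r0 then (t : ℕ) else (t : ℕ) + 1) (by omega) hs)
        - eps kv G w (by omega) (if (t : ℕ) < r0 then (t : ℕ) else (t : ℕ) + 1)
          • G (rowIdxN kv 0 r0 (by omega) hr0) := by
  rw [gen, dif_pos h0, dif_pos hs]

include hm in
lemma emb_lt (j : Fin m) (h0 : (j : ℕ) = 0) (t : Fin (sz kv j)) :
    (if (t : ℕ) < r0 then (t : ℕ) else (t : ℕ) + 1) < extk kv 0 := by
  have h : (t : ℕ) < sz kv j := t.2
  have hsz : sz kv j = kv j - 1 := sz_zero kv hm j h0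
  have he : extk kv 0 = kv j := by rw [← h0, extk_coe]
  rw [he]
  split <;> omega

lemma emb_ne (t : ℕ) : (if t < r0 then t else t + 1) ≠ r0 := by split <;> omega

lemma gen_def_row (j : Fin m) (h0 : (j : ℕ) ≠ 0) (t : Fin (sz kv j))
    (ht : (t : ℕ) < extk kv (j : ℕ)) :
    gen kv G w r0 hm hr0 j t = G (rowIdxN kv (j : ℕ) (t : ℕ) j.2 ht) := by
  rw [gen, dif_neg h0, dif_pos ht]

lemma gen_def_extra (j : Fin m) (h0 : (j : ℕ) ≠ 0) (t : Fin (sz kv j))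
    (ht : ¬((t : ℕ) < extk kv (j : ℕ))) (h1 : (t : ℕ) = extk kv (j : ℕ) ∧ (j : ℕ) = 1) :
    gen kv G w r0 hm hr0 j t = (2 : ℤ) • G (rowIdxN kv 0 r0 (by omega) hr0) := by
  rw [gen, dif_neg h0, dif_neg ht, if_pos h1]

lemma gen_def_w (j : Fin m) (h0 : (j : ℕ) ≠ 0) (t : Fin (sz kv j))
    (ht : ¬((t : ℕ) < extk kv (j : ℕ)))
    (h1 : ¬((t : ℕ) = extk kv (j : ℕ) ∧ (j : ℕ) = 1)) :
    gen kv G w r0 hm hr0 j t = w := by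
  rw [gen, dif_neg h0, dif_neg ht, if_neg h1]

lemma w_index (j : Fin m) (h0 : (j : ℕ) ≠ 0) (t : Fin (sz kv j))
    (ht : ¬((t : ℕ) < extk kv (j : ℕ)))
    (h1 : ¬((t : ℕ) = extk kv (j : ℕ) ∧ (j : ℕ) = 1)) : (j : ℕ) = m - 1 := by
  have h : (t : ℕ) < sz kv j := t.2
  have hsz := sz_pos' kv j h0
  have he : extk kv (j : ℕ) = kv j := extk_coe kv j
  rw [he] at ht h1
  by_contra hne
  rw [if_neg hne] at hsz
  by_cases hj1 : (j : ℕ) = 1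
  · rw [if_pos hj1] at hsz
    have ht2 : (t : ℕ) ≠ kv j := fun hh => h1 ⟨hh, hj1⟩
    omega
  · rw [if_neg hj1] at hsz
    omega

lemma w_index_unique (j : Fin m) (t t' : Fin (sz kv j)) (h0 : (j : ℕ) ≠ 0)
    (ht : ¬((t : ℕ) < extk kv (j : ℕ)))
    (h1 : ¬((t : ℕ) = extk kv (j : ℕ) ∧ (j : ℕ) = 1))
    (ht' : ¬((t' : ℕ) < extk kv (j : ℕ)))
    (h1' : ¬((t' : ℕ) = extk kv (j : ℕ) ∧ (j : ℕ) = 1)) : t = t' := by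
  have h : (t : ℕ) < sz kv j := t.2
  have h' : (t' : ℕ) < sz kv j := t'.2
  have hsz := sz_pos' kv j h0
  have he : extk kv (j : ℕ) = kv j := extk_coe kv j
  rw [he] at ht h1 ht' h1'
  apply Fin.ext
  by_cases hj1 : (j : ℕ) = 1
  · have ha : (t : ℕ) ≠ kv j := fun hh => h1 ⟨hh, hj1⟩
    have ha' : (t' : ℕ) ≠ kv j := fun hh => h1' ⟨hh, hj1⟩
    rw [if_pos hj1] at hsz
    by_cases hj2 : (j : ℕ) = m - 1
    · rw [if_pos hj2] at hsz; omega
    · rw [if_neg hj2] at hsz; omega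
  · rw [if_neg hj1] at hsz
    by_cases hj2 : (j : ℕ) = m - 1
    · rw [if_pos hj2] at hsz; omega
    · rw [if_neg hj2] at hsz; omega

lemma gen_dvd (hSF : StandardForm kv G)
    (hcoord : ∀ i, w i = 0 ∨ w i = (2 ^ (m - 1) : ZMod (2 ^ m)))
    (j : Fin m) (t : Fin (sz kv j)) (c : Fin n) :
    ∃ a, gen kv G w r0 hm hr0 j t c = 2 ^ (j : ℕ) * a := by
  by_cases h0 : (j : ℕ) = 0
  · rw [gen_def0 kv G w r0 hm hr0 j h0 t (emb_lt kv r0 hm j h0 t)]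
    exact ⟨_, by rw [h0, pow_zero, one_mul]⟩
  · by_cases ht : (t : ℕ) < extk kv (j : ℕ)
    · rw [gen_def_row kv G w r0 hm hr0 j h0 t ht]
      exact G_entry_dvd kv hSF j.2 ht c
    · by_cases h1 : (t : ℕ) = extk kv (j : ℕ) ∧ (j : ℕ) = 1
      · rw [gen_def_extra kv G w r0 hm hr0 j h0 t ht h1]
        refine ⟨G (rowIdxN kv 0 r0 (by omega) hr0) c, ?_⟩
        rw [h1.2, pow_one]
        show (2 : ℤ) • G (rowIdxN kv 0 r0 (by omega) hr0) c = _
        rw [zsmul_eq_mul]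
        norm_num
      · rw [gen_def_w kv G w r0 hm hr0 j h0 t ht h1]
        have hj := w_index kv j h0 t ht h1
        rcases hcoord c with h | h
        · exact ⟨0, by rw [h, mul_zero]⟩
        · exact ⟨1, by rw [h, hj, mul_one]⟩

lemma gen_order (hSF : StandardForm kv G)
    (hcoord : ∀ i, w i = 0 ∨ w i = (2 ^ (m - 1) : ZMod (2 ^ m)))
    (j : Fin m) (t : Fin (sz kv j)) :
    ((2 ^ (m - (j : ℕ)) : ℕ) : ℤ) • gen kv G w r0 hm hr0 j t = 0 := by
  funext c
  obtain ⟨a, ha⟩ := gen_dvd kv G w r0 hm hr0 hSF hcoord j t c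
  have h : ((2 ^ (m - (j : ℕ)) : ℕ) : ℤ) • (gen kv G w r0 hm hr0 j t c) = 0 := by
    refine term_zero (le_of_lt j.2) ?_ ha
    push_cast
    exact dvd_rfl
  simpa using h

/-- The candidate isomorphism, as an additive hom. -/
def Theta (hSF : StandardForm kv G)
    (hcoord : ∀ i, w i = 0 ∨ w i = (2 ^ (m - 1) : ZMod (2 ^ m))) :
    (∀ j : Fin m, Fin (sz kv j) → ZMod (2 ^ (m - (j : ℕ)))) →+ (Fin n → ZMod (2 ^ m)) :=
  AddMonoidHom.mk' (ThetaFun kv G w r0 hm hr0) (fun x y => by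
    unfold ThetaFun
    rw [← Finset.sum_add_distrib]
    refine Finset.sum_congr rfl fun j _ => ?_
    rw [← Finset.sum_add_distrib]
    refine Finset.sum_congr rfl fun t _ => ?_
    exact val_smul_add (by positivity) _
      (gen_order kv G w r0 hm hr0 hSF hcoord j t) (x j t) (y j t))

lemma Theta_apply (hSF : StandardForm kv G)
    (hcoord : ∀ i, w i = 0 ∨ w i = (2 ^ (m - 1) : ZMod (2 ^ m)))
    (x : ∀ j : Fin m, Fin (sz kv j) → ZMod (2 ^ (m - (j : ℕ)))) (c : Fin n) :
    Theta kv G w r0 hm hr0 hSF hcoord x c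
      = ∑ j, ∑ t, ((x j t).val : ℤ) • gen kv G w r0 hm hr0 j t c := by
  show ThetaFun kv G w r0 hm hr0 x c = _
  unfold ThetaFun
  simp only [Finset.sum_apply, Pi.smul_apply]

end main2
end Doubling

namespace Doubling
section main3
variable {m n : ℕ} (kv : Fin m → ℕ) (G : Fin (psum kv m) → Fin n → ZMod (2 ^ m))
  (w : Fin n → ZMod (2 ^ m)) (r0 : ℕ) (hm : 2 ≤ m) (hr0 : r0 < extk kv 0)

lemma term_kill (hSF : StandardForm kv G)
    (hcoord : ∀ i, w i = 0 ∨ w i = (2 ^ (m - 1) : ZMod (2 ^ m)))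
    (j : Fin m) (t : Fin (sz kv j)) (col : Fin n) {cc : ℤ}
    (hdvd : (2 : ℤ) ^ (m - (j : ℕ)) ∣ cc) :
    cc • gen kv G w r0 hm hr0 j t col = 0 := by
  obtain ⟨a, ha⟩ := gen_dvd kv G w r0 hm hr0 hSF hcoord j t col
  exact term_zero (le_of_lt j.2) hdvd ha

lemma G0_entry (hSF : StandardForm kv G) (h0m : 0 < m) (u : ℕ) (hu : u < extk kv 0)
    (col : Fin n) (hcol : (col : ℕ) < psum kv 1) :
    G (rowIdxN kv 0 u h0m hu) col = if u = (col : ℕ) then 1 else 0 := by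
  have h := G_entry_diag kv hSF h0m hu col (by rw [psum_zero]; omega) hcol
  simpa [rowIdxN, psum_zero] using h

set_option maxHeartbeats 1000000 in
lemma key_div (hSF : StandardForm kv G)
    (hcoord : ∀ i, w i = 0 ∨ w i = (2 ^ (m - 1) : ZMod (2 ^ m)))
    (hzero : ∀ i : Fin n, (i : ℕ) < psum kv m → w i = 0)
    (hwne : w ≠ 0)
    (c : ∀ j : Fin m, Fin (sz kv j) → ℤ)
    (hc : ∑ j, ∑ t, c j t • gen kv G w r0 hm hr0 j t = 0) :
    ∀ (j : Fin m) (t : Fin (sz kv j)), (2 : ℤ) ^ (m - (j : ℕ)) ∣ c j t := by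
  have hKn : psum kv m ≤ n := hSF.1
  have hps1 : psum kv 1 = extk kv 0 := by
    have h : psum kv 1 = psum kv 0 + extk kv 0 := psum_succ kv 0
    have h0 := psum_zero kv
    omega
  have hp1m : psum kv 1 ≤ psum kv m := psum_mono kv (by omega)
  have heval : ∀ col : Fin n,
      (∑ j, ∑ t, c j t • gen kv G w r0 hm hr0 j t col) = 0 := by
    intro col
    have h := congrFun hc col
    simpa [Finset.sum_apply, Pi.smul_apply] using h
  set j0 : Fin m := ⟨0, by omega⟩ with hj0def
  set j1 : Fin m := ⟨1, by omega⟩ with hj1def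
  have hj1ne : (j1 : ℕ) ≠ 0 := by simp [hj1def]
  have hsz1 : (kv j1 : ℕ) < sz kv j1 := by
    rw [sz_pos' kv j1 hj1ne]
    have : ((j1 : ℕ) = 1) := rfl
    rw [if_pos this]
    omega
  set t1 : Fin (sz kv j1) := ⟨kv j1, hsz1⟩ with ht1def
  -- Stage A : block-0 coefficients are divisible by 2^m
  have hA : ∀ t : Fin (sz kv j0), (2 : ℤ) ^ (m - (j0 : ℕ)) ∣ c j0 t := by
    intro t
    have hs : (if (t : ℕ) < r0 then (t : ℕ) else (t : ℕ) + 1) < extk kv 0 :=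
      emb_lt kv r0 hm j0 rfl t
    set s : ℕ := if (t : ℕ) < r0 then (t : ℕ) else (t : ℕ) + 1 with hsdef
    have hsm : s < psum kv m := by omega
    set col : Fin n := ⟨s, by omega⟩ with hcoldef
    have hcols : (col : ℕ) = s := rfl
    have hcol1 : (col : ℕ) < psum kv 1 := by omega
    have hr0G : G (rowIdxN kv 0 r0 (by omega) hr0) col = 0 := by
      rw [G0_entry kv G hSF (by omega) r0 hr0 col hcol1, if_neg]
      rw [hcols]
      exact fun h => (emb_ne r0 (t : ℕ)) (by omega)
    have hmain : gen kv G w r0 hm hr0 j0 t col = 1 := by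
      have hg := gen_def0 kv G w r0 hm hr0 j0 rfl t hs
      rw [hg, Pi.sub_apply, Pi.smul_apply, hr0G, smul_zero, sub_zero,
        G0_entry kv G hSF (by omega) s hs col hcol1, if_pos hcols.symm]
    have houter : ∀ j ∈ Finset.univ, j ≠ j0 →
        (∑ t' : Fin (sz kv j), c j t' • gen kv G w r0 hm hr0 j t' col) = 0 := by
      intro j _ hne
      have h0 : (j : ℕ) ≠ 0 := fun h => hne (Fin.ext h)
      refine Finset.sum_eq_zero fun t' _ => ?_
      by_cases ht' : (t' : ℕ) < extk kv (j : ℕ)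
      · rw [gen_def_row kv G w r0 hm hr0 j h0 t' ht']
        rw [G_entry_lt kv hSF j.2 ht' col
          (lt_of_lt_of_le hcol1 (psum_mono kv (by omega)))]
        exact smul_zero _
      · by_cases h1 : (t' : ℕ) = extk kv (j : ℕ) ∧ (j : ℕ) = 1
        · rw [gen_def_extra kv G w r0 hm hr0 j h0 t' ht' h1, Pi.smul_apply, hr0G,
            smul_zero, smul_zero]
        · rw [gen_def_w kv G w r0 hm hr0 j h0 t' ht' h1]
          rw [hzero col (by omega), smul_zero]
    have hinner : ∀ t' ∈ Finset.univ, t' ≠ t →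
        c j0 t' • gen kv G w r0 hm hr0 j0 t' col = 0 := by
      intro t' _ hne
      have hs' : (if (t' : ℕ) < r0 then (t' : ℕ) else (t' : ℕ) + 1) < extk kv 0 :=
        emb_lt kv r0 hm j0 rfl t'
      rw [gen_def0 kv G w r0 hm hr0 j0 rfl t' hs', Pi.sub_apply, Pi.smul_apply,
        hr0G, smul_zero, sub_zero,
        G0_entry kv G hSF (by omega) _ hs' col hcol1, if_neg, smul_zero]
      rw [hcols]
      intro hcontra
      apply hne
      apply Fin.ext
      rw [hsdef] at hcontra
      split_ifs at hcontra <;> omega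
    have hred : (∑ j, ∑ t', c j t' • gen kv G w r0 hm hr0 j t' col)
        = c j0 t • gen kv G w r0 hm hr0 j0 t col :=
      (Finset.sum_eq_single_of_mem j0 (Finset.mem_univ _) houter).trans
        (Finset.sum_eq_single_of_mem t (Finset.mem_univ _) hinner)
    have hfin := heval col
    rw [hred, hmain] at hfin
    have : c j0 t • ((2 : ZMod (2 ^ m)) ^ (j0 : ℕ)) = 0 := by
      simpa [show (j0 : ℕ) = 0 from rfl] using hfin
    exact coeff_dvd (le_of_lt j0.2) this
  have hext1 : extk kv (j1 : ℕ) = kv j1 := extk_coe kv j1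
  -- Stage B : coefficient of 2*G_{r0}
  have hB : (2 : ℤ) ^ (m - (j1 : ℕ)) ∣ c j1 t1 := by
    have hr0m : r0 < psum kv m := by omega
    set col : Fin n := ⟨r0, by omega⟩ with hcoldef
    have hcols : (col : ℕ) = r0 := rfl
    have hcol1 : (col : ℕ) < psum kv 1 := by omega
    have hr0G : G (rowIdxN kv 0 r0 (by omega) hr0) col = 1 := by
      rw [G0_entry kv G hSF (by omega) r0 hr0 col hcol1, if_pos hcols.symm]
    have houter : ∀ j ∈ Finset.univ, j ≠ j1 →
        (∑ t' : Fin (sz kv j), c j t' • gen kv G w r0 hm hr0 j t' col) = 0 := by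
      intro j _ hne
      refine Finset.sum_eq_zero fun t' _ => ?_
      by_cases h0 : (j : ℕ) = 0
      · have e : j = j0 := Fin.ext h0
        subst e
        exact term_kill kv G w r0 hm hr0 hSF hcoord j0 t' col (hA t')
      · by_cases ht' : (t' : ℕ) < extk kv (j : ℕ)
        · rw [gen_def_row kv G w r0 hm hr0 j h0 t' ht']
          rw [G_entry_lt kv hSF j.2 ht' col
            (lt_of_lt_of_le hcol1 (psum_mono kv (by omega)))]
          exact smul_zero _
        · by_cases h1 : (t' : ℕ) = extk kv (j : ℕ) ∧ (j : ℕ) = 1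
          · exact absurd (Fin.ext h1.2 : j = j1) hne
          · rw [gen_def_w kv G w r0 hm hr0 j h0 t' ht' h1]
            rw [hzero col (by omega), smul_zero]
    have hinner : ∀ t' ∈ Finset.univ, t' ≠ t1 →
        c j1 t' • gen kv G w r0 hm hr0 j1 t' col = 0 := by
      intro t' _ hne
      by_cases ht' : (t' : ℕ) < extk kv (j1 : ℕ)
      · rw [gen_def_row kv G w r0 hm hr0 j1 hj1ne t' ht']
        rw [G_entry_lt kv hSF j1.2 ht' col hcol1]
        exact smul_zero _
      · by_cases h1 : (t' : ℕ) = extk kv (j1 : ℕ) ∧ (j1 : ℕ) = 1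
        · exact absurd (Fin.ext (by rw [h1.1, hext1]) : t' = t1) hne
        · rw [gen_def_w kv G w r0 hm hr0 j1 hj1ne t' ht' h1]
          rw [hzero col (by omega), smul_zero]
    have ht1v : (t1 : ℕ) = kv j1 := rfl
    have hnt1 : ¬((t1 : ℕ) < extk kv (j1 : ℕ)) := by
      rw [hext1]; omega
    have hgen1 : gen kv G w r0 hm hr0 j1 t1 col = (2 : ZMod (2 ^ m)) ^ 1 := by
      rw [gen_def_extra kv G w r0 hm hr0 j1 hj1ne t1 hnt1 ⟨by rw [hext1], rfl⟩,
        Pi.smul_apply, hr0G, pow_one]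
      norm_num
    have hred : (∑ j, ∑ t', c j t' • gen kv G w r0 hm hr0 j t' col)
        = c j1 t1 • gen kv G w r0 hm hr0 j1 t1 col :=
      (Finset.sum_eq_single_of_mem j1 (Finset.mem_univ _) houter).trans
        (Finset.sum_eq_single_of_mem t1 (Finset.mem_univ _) hinner)
    have hfin := heval col
    rw [hred, hgen1] at hfin
    exact coeff_dvd (by omega) hfin
  -- Stage C : real rows in blocks >= 1, by induction on the block
  have hC : ∀ J : ℕ, ∀ j : Fin m, (j : ℕ) < J → (j : ℕ) ≠ 0 →
      ∀ t : Fin (sz kv j), (t : ℕ) < extk kv (j : ℕ) →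
        (2 : ℤ) ^ (m - (j : ℕ)) ∣ c j t := by
    intro J
    induction J with
    | zero => exact fun j hj => absurd hj (Nat.not_lt_zero _)
    | succ J ih =>
      intro j hjJ h0 t ht
      have hstep : psum kv ((j : ℕ) + 1) = psum kv (j : ℕ) + extk kv (j : ℕ) :=
        psum_succ kv _
      have hle : psum kv ((j : ℕ) + 1) ≤ psum kv m := psum_mono kv j.2
      set col : Fin n := ⟨psum kv (j : ℕ) + (t : ℕ), by omega⟩ with hcoldef
      have hcolv : (col : ℕ) = psum kv (j : ℕ) + (t : ℕ) := rfl
      have hcollt : (col : ℕ) < psum kv ((j : ℕ) + 1) := by omega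
      have hcolge : psum kv (j : ℕ) ≤ (col : ℕ) := by omega
      have hcolm : (col : ℕ) < psum kv m := by omega
      have houter : ∀ j' ∈ Finset.univ, j' ≠ j →
          (∑ t' : Fin (sz kv j'), c j' t' • gen kv G w r0 hm hr0 j' t' col) = 0 := by
        intro j' _ hne
        refine Finset.sum_eq_zero fun t' _ => ?_
        by_cases h0' : (j' : ℕ) = 0
        · have e : j' = j0 := Fin.ext h0'
          subst e
          exact term_kill kv G w r0 hm hr0 hSF hcoord j0 t' col (hA t')
        · by_cases ht'' : (t' : ℕ) < extk kv (j' : ℕ)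
          · rcases lt_trichotomy (j' : ℕ) (j : ℕ) with hlt | heq | hgt
            · exact term_kill kv G w r0 hm hr0 hSF hcoord j' t' col
                (ih j' (by omega) h0' t' ht'')
            · exact absurd (Fin.ext heq : j' = j) hne
            · rw [gen_def_row kv G w r0 hm hr0 j' h0' t' ht'']
              rw [G_entry_lt kv hSF j'.2 ht'' col
                (lt_of_lt_of_le hcollt (psum_mono kv (by omega)))]
              exact smul_zero _
          · by_cases h1 : (t' : ℕ) = extk kv (j' : ℕ) ∧ (j' : ℕ) = 1
            · have e : j' = j1 := Fin.ext h1.2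
              subst e
              have e2 : t' = t1 := Fin.ext (by rw [h1.1, hext1])
              subst e2
              exact term_kill kv G w r0 hm hr0 hSF hcoord j1 t1 col hB
            · rw [gen_def_w kv G w r0 hm hr0 j' h0' t' ht'' h1]
              rw [hzero col hcolm, smul_zero]
      have hinner : ∀ t' ∈ Finset.univ, t' ≠ t →
          c j t' • gen kv G w r0 hm hr0 j t' col = 0 := by
        intro t' _ hne
        by_cases ht'' : (t' : ℕ) < extk kv (j : ℕ)
        · rw [gen_def_row kv G w r0 hm hr0 j h0 t' ht'']
          rw [G_entry_diag kv hSF j.2 ht'' col hcolge hcollt,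
            if_neg (fun hcontra => hne (Fin.ext (by omega))), smul_zero]
        · by_cases h1 : (t' : ℕ) = extk kv (j : ℕ) ∧ (j : ℕ) = 1
          · have e : j = j1 := Fin.ext h1.2
            subst e
            have e2 : t' = t1 := Fin.ext (by rw [h1.1, hext1])
            subst e2
            exact term_kill kv G w r0 hm hr0 hSF hcoord j1 t1 col hB
          · rw [gen_def_w kv G w r0 hm hr0 j h0 t' ht'' h1]
            rw [hzero col hcolm, smul_zero]
      have hgenv : gen kv G w r0 hm hr0 j t col = (2 : ZMod (2 ^ m)) ^ (j : ℕ) := by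
        rw [gen_def_row kv G w r0 hm hr0 j h0 t ht]
        rw [G_entry_diag kv hSF j.2 ht col hcolge hcollt, if_pos hcolv.symm]
      have hred : (∑ j', ∑ t', c j' t' • gen kv G w r0 hm hr0 j' t' col)
          = c j t • gen kv G w r0 hm hr0 j t col :=
        (Finset.sum_eq_single_of_mem j (Finset.mem_univ _) houter).trans
          (Finset.sum_eq_single_of_mem t (Finset.mem_univ _) hinner)
      have hfin := heval col
      rw [hred, hgenv] at hfin
      exact coeff_dvd (le_of_lt j.2) hfin
  -- Stage D : the coefficient of w
  have hD : ∀ (j : Fin m) (t : Fin (sz kv j)), (j : ℕ) ≠ 0 →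
      ¬((t : ℕ) < extk kv (j : ℕ)) →
      ¬((t : ℕ) = extk kv (j : ℕ) ∧ (j : ℕ) = 1) →
      (2 : ℤ) ^ (m - (j : ℕ)) ∣ c j t := by
    intro j t h0 ht h1
    obtain ⟨i, hi⟩ : ∃ i, w i ≠ 0 := by
      by_contra h
      push_neg at h
      exact hwne (funext h)
    have hwi : w i = 2 ^ (m - 1) := (hcoord i).resolve_left hi
    have hjm : (j : ℕ) = m - 1 := w_index kv j h0 t ht h1
    have houter : ∀ j' ∈ Finset.univ, j' ≠ j →
        (∑ t' : Fin (sz kv j'), c j' t' • gen kv G w r0 hm hr0 j' t' i) = 0 := by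
      intro j' _ hne
      refine Finset.sum_eq_zero fun t' _ => ?_
      by_cases h0' : (j' : ℕ) = 0
      · have e : j' = j0 := Fin.ext h0'
        subst e
        exact term_kill kv G w r0 hm hr0 hSF hcoord j0 t' i (hA t')
      · by_cases ht'' : (t' : ℕ) < extk kv (j' : ℕ)
        · exact term_kill kv G w r0 hm hr0 hSF hcoord j' t' i
            (hC m j' j'.2 h0' t' ht'')
        · by_cases h1' : (t' : ℕ) = extk kv (j' : ℕ) ∧ (j' : ℕ) = 1
          · have e : j' = j1 := Fin.ext h1'.2
            subst e
            have e2 : t' = t1 := Fin.ext (by rw [h1'.1, hext1])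
            subst e2
            exact term_kill kv G w r0 hm hr0 hSF hcoord j1 t1 i hB
          · have hjm' : (j' : ℕ) = m - 1 := w_index kv j' h0' t' ht'' h1'
            exact absurd (Fin.ext (by omega) : j' = j) hne
    have hinner : ∀ t' ∈ Finset.univ, t' ≠ t →
        c j t' • gen kv G w r0 hm hr0 j t' i = 0 := by
      intro t' _ hne
      by_cases ht'' : (t' : ℕ) < extk kv (j : ℕ)
      · exact term_kill kv G w r0 hm hr0 hSF hcoord j t' i
          (hC m j j.2 h0 t' ht'')
      · by_cases h1' : (t' : ℕ) = extk kv (j : ℕ) ∧ (j : ℕ) = 1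
        · have e : j = j1 := Fin.ext h1'.2
          subst e
          have e2 : t' = t1 := Fin.ext (by rw [h1'.1, hext1])
          subst e2
          exact term_kill kv G w r0 hm hr0 hSF hcoord j1 t1 i hB
        · exact absurd (w_index_unique kv j t' t h0 ht'' h1' ht h1) hne
    have hgenv : gen kv G w r0 hm hr0 j t i = (2 : ZMod (2 ^ m)) ^ (m - 1) := by
      rw [gen_def_w kv G w r0 hm hr0 j h0 t ht h1, hwi]
    have hred : (∑ j', ∑ t', c j' t' • gen kv G w r0 hm hr0 j' t' i)
        = c j t • gen kv G w r0 hm hr0 j t i :=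
      (Finset.sum_eq_single_of_mem j (Finset.mem_univ _) houter).trans
        (Finset.sum_eq_single_of_mem t (Finset.mem_univ _) hinner)
    have hfin := heval i
    rw [hred, hgenv] at hfin
    have hdd := coeff_dvd (by omega : m - 1 ≤ m) hfin
    have hexp : m - (m - 1) = m - (j : ℕ) := by omega
    rwa [hexp] at hdd
  -- Conclusion
  intro j t
  by_cases h0 : (j : ℕ) = 0
  · have e : j = j0 := Fin.ext h0
    subst e
    exact hA t
  · by_cases ht : (t : ℕ) < extk kv (j : ℕ)
    · exact hC m j j.2 h0 t ht
    · by_cases h1 : (t : ℕ) = extk kv (j : ℕ) ∧ (j : ℕ) = 1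
      · have e : j = j1 := Fin.ext h1.2
        subst e
        have e2 : t = t1 := Fin.ext (by rw [h1.1, hext1])
        subst e2
        exact hB
      · exact hD j t h0 ht h1

end main3
end Doubling

namespace Doubling
section main4
variable {m n : ℕ} (kv : Fin m → ℕ) (G : Fin (psum kv m) → Fin n → ZMod (2 ^ m))
  (w : Fin n → ZMod (2 ^ m)) (r0 : ℕ)

lemma mem_closure_range_iff {V : Type*} [AddCommGroup V] {ι : Type*} [Fintype ι]
    [DecidableEq ι] (g : ι → V) (x : V) :
    x ∈ AddSubgroup.closure (Set.range g) ↔ ∃ c : ι → ℤ, x = ∑ i, c i • g i := by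
  constructor
  · intro hx
    induction hx using AddSubgroup.closure_induction with
    | mem y hy =>
      obtain ⟨i, rfl⟩ := hy
      refine ⟨fun i' => if i' = i then 1 else 0, ?_⟩
      rw [Finset.sum_eq_single_of_mem i (Finset.mem_univ _)
        (fun b _ hb => by simp [hb])]
      simp
    | zero => exact ⟨0, by simp⟩
    | add y z _ _ hy hz =>
      obtain ⟨cy, rfl⟩ := hy
      obtain ⟨cz, rfl⟩ := hz
      exact ⟨cy + cz, by rw [← Finset.sum_add_distrib]; simp [add_smul]⟩
    | neg y _ hy =>
      obtain ⟨cy, rfl⟩ := hy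
      exact ⟨-cy, by simp [neg_smul]⟩
  · rintro ⟨c, rfl⟩
    exact sum_mem fun i _ =>
      AddSubgroup.zsmul_mem _ (AddSubgroup.subset_closure (Set.mem_range_self i)) _

variable (hcoord : ∀ i, w i = 0 ∨ w i = (2 ^ (m - 1) : ZMod (2 ^ m)))

include hcoord in
lemma two_mul_inner (hm : 2 ≤ m) (v : Fin n → ZMod (2 ^ m)) :
    (2 : ZMod (2 ^ m)) * innerZ w v = 0 := by
  unfold innerZ
  rw [Finset.mul_sum]
  refine Finset.sum_eq_zero fun i _ => ?_
  rcases hcoord i with h | h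
  · rw [h, zero_mul, mul_zero]
  · rw [h, ← mul_assoc]
    have h2 : (2 : ZMod (2 ^ m)) * 2 ^ (m - 1) = 0 := by
      have : (2 : ZMod (2 ^ m)) * 2 ^ (m - 1) = 2 ^ m := by
        rw [← pow_succ']
        congr 1
        omega
      rw [this, pow2m_zero]
    rw [h2, zero_mul]

include hcoord in
lemma inner_two_cases (hm : 2 ≤ m) (v : Fin n → ZMod (2 ^ m)) :
    innerZ w v = 0 ∨ innerZ w v = 2 ^ (m - 1) :=
  two_torsion (by omega) _ (two_mul_inner w hcoord hm v)

include hcoord in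
lemma inner_even (hm : 2 ≤ m) (v : Fin n → ZMod (2 ^ m))
    (hv : ∀ i, ∃ a, v i = 2 * a) : innerZ w v = 0 := by
  unfold innerZ
  refine Finset.sum_eq_zero fun i _ => ?_
  obtain ⟨a, ha⟩ := hv i
  rcases hcoord i with h | h
  · rw [h, zero_mul]
  · rw [h, ha, ← mul_assoc]
    have h2 : (2 : ZMod (2 ^ m)) ^ (m - 1) * 2 = 0 := by
      have : (2 : ZMod (2 ^ m)) ^ (m - 1) * 2 = 2 ^ m := by
        rw [← pow_succ]
        congr 1
        omega
      rw [this, pow2m_zero]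
    rw [h2, zero_mul]

include hcoord in
lemma inner_w_w (hm : 2 ≤ m) : innerZ w w = 0 := by
  refine inner_even w hcoord hm w fun i => ?_
  rcases hcoord i with h | h
  · exact ⟨0, by rw [h, mul_zero]⟩
  · refine ⟨2 ^ (m - 2), ?_⟩
    rw [h, ← pow_succ']
    congr 1
    omega

lemma row_decomp (r : Fin (psum kv m)) :
    ∃ (l : Fin m) (t : ℕ) (ht : t < extk kv (l : ℕ)),
      r = rowIdxN kv (l : ℕ) t l.2 ht := by
  obtain ⟨l, hl1, hl2⟩ := exists_block kv m le_rfl (r : ℕ) r.2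
  have hstep : psum kv ((l : ℕ) + 1) = psum kv (l : ℕ) + extk kv (l : ℕ) :=
    psum_succ kv _
  refine ⟨l, (r : ℕ) - psum kv (l : ℕ), by omega, ?_⟩
  apply Fin.ext
  show (r : ℕ) = psum kv (l : ℕ) + ((r : ℕ) - psum kv (l : ℕ))
  omega

include hcoord in
lemma inner_row_pos (hSF : StandardForm kv G) (hm : 2 ≤ m)
    {j t : ℕ} (hj : j < m) (ht : t < extk kv j) (hj1 : 1 ≤ j) :
    innerZ w (G (rowIdxN kv j t hj ht)) = 0 := by
  refine inner_even w hcoord hm _ fun i => ?_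
  obtain ⟨a, ha⟩ := G_entry_dvd kv hSF hj ht i
  refine ⟨2 ^ (j - 1) * a, ?_⟩
  rw [ha, ← mul_assoc, ← pow_succ']
  congr 2
  omega

lemma innerHom_apply (v : Fin n → ZMod (2 ^ m)) : innerHom w v = innerZ w v := rfl

lemma inner_zsmul (b : Fin n → ZMod (2 ^ m)) (e : ℤ) :
    innerZ w (e • b) = e • innerZ w b := by
  unfold innerZ
  rw [Finset.smul_sum]
  refine Finset.sum_congr rfl fun i _ => ?_
  simp only [Pi.smul_apply, zsmul_eq_mul, Pi.mul_apply, Pi.intCast_apply]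
  ring

lemma inner_sub_zsmul (a b : Fin n → ZMod (2 ^ m)) (e : ℤ) :
    innerZ w (a - e • b) = innerZ w a - e • innerZ w b := by
  unfold innerZ
  rw [Finset.smul_sum, ← Finset.sum_sub_distrib]
  refine Finset.sum_congr rfl fun i _ => ?_
  simp only [Pi.sub_apply, Pi.smul_apply, zsmul_eq_mul, Pi.mul_apply, Pi.intCast_apply]
  ring

lemma eps_spec (h0m : 0 < m) (s : ℕ) (hs : s < extk kv 0) :
    (eps kv G w h0m s = 0 ∧ innerZ w (G (rowIdxN kv 0 s h0m hs)) = 0) ∨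
    (eps kv G w h0m s = 1 ∧ innerZ w (G (rowIdxN kv 0 s h0m hs)) ≠ 0) := by
  rw [eps, dif_pos hs]
  split_ifs with h
  · exact Or.inl ⟨rfl, h⟩
  · exact Or.inr ⟨rfl, h⟩

include hcoord in
lemma inner_gen_zero (hSF : StandardForm kv G) (hm : 2 ≤ m) (hr0 : r0 < extk kv 0)
    (hphi : innerZ w (G (rowIdxN kv 0 r0 (by omega) hr0)) ≠ 0)
    (j : Fin m) (t : Fin (sz kv j)) :
    innerZ w (gen kv G w r0 hm hr0 j t) = 0 := by
  have hphiv : innerZ w (G (rowIdxN kv 0 r0 (by omega) hr0)) = 2 ^ (m - 1) :=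
    (inner_two_cases w hcoord hm _).resolve_left hphi
  by_cases h0 : (j : ℕ) = 0
  · have hs : (if (t : ℕ) < r0 then (t : ℕ) else (t : ℕ) + 1) < extk kv 0 :=
      emb_lt kv r0 hm j h0 t
    rw [gen_def0 kv G w r0 hm hr0 j h0 t hs, inner_sub_zsmul w]
    rcases eps_spec kv G w (by omega) _ hs with ⟨he, hv⟩ | ⟨he, hv⟩
    · rw [he, zero_smul, sub_zero]
      exact hv
    · rw [he, one_smul, hphiv,
        (inner_two_cases w hcoord hm _).resolve_left hv, sub_self]
  · by_cases ht : (t : ℕ) < extk kv (j : ℕ)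
    · rw [gen_def_row kv G w r0 hm hr0 j h0 t ht]
      exact inner_row_pos kv G w hcoord hSF hm j.2 ht (by omega)
    · by_cases h1 : (t : ℕ) = extk kv (j : ℕ) ∧ (j : ℕ) = 1
      · rw [gen_def_extra kv G w r0 hm hr0 j h0 t ht h1]
        rw [inner_zsmul w, zsmul_eq_mul]
        push_cast
        exact two_mul_inner w hcoord hm _
      · rw [gen_def_w kv G w r0 hm hr0 j h0 t ht h1]
        exact inner_w_w w hcoord hm

end main4
end Doubling

namespace Doubling
section main5
variable {m n : ℕ} (kv : Fin m → ℕ) (G : Fin (psum kv m) → Fin n → ZMod (2 ^ m))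
  (w : Fin n → ZMod (2 ^ m)) (r0 : ℕ) (hm : 2 ≤ m) (hr0 : r0 < extk kv 0)

lemma inner_sum {ι : Type*} (s : Finset ι) (f : ι → (Fin n → ZMod (2 ^ m))) :
    innerZ w (∑ i ∈ s, f i) = ∑ i ∈ s, innerZ w (f i) :=
  map_sum (innerHom w) f s

lemma inner_add (a b : Fin n → ZMod (2 ^ m)) :
    innerZ w (a + b) = innerZ w a + innerZ w b :=
  map_add (innerHom w) a b

lemma gen_mem_range (hSF : StandardForm kv G)
    (hcoord : ∀ i, w i = 0 ∨ w i = (2 ^ (m - 1) : ZMod (2 ^ m)))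
    (j : Fin m) (t : Fin (sz kv j)) :
    gen kv G w r0 hm hr0 j t ∈ (Theta kv G w r0 hm hr0 hSF hcoord).range := by
  classical
  obtain ⟨x, hxj, hxne⟩ : ∃ x : (∀ j' : Fin m, Fin (sz kv j') → ZMod (2 ^ (m - (j' : ℕ)))),
      x j = Pi.single t 1 ∧ ∀ j' ≠ j, x j' = 0 :=
    ⟨Pi.single j (Pi.single t 1), Pi.single_eq_same _ _,
      fun j' h => Pi.single_eq_of_ne h _⟩
  refine ⟨x, ?_⟩
  have hTh : Theta kv G w r0 hm hr0 hSF hcoord x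
      = ∑ j', ∑ t', (((x j' t').val : ℤ)) • gen kv G w r0 hm hr0 j' t' := rfl
  rw [hTh]
  have houter : ∀ j' ∈ Finset.univ, j' ≠ j →
      (∑ t' : Fin (sz kv j'), (((x j' t').val : ℤ)) • gen kv G w r0 hm hr0 j' t') = 0 := by
    intro j' _ hne
    refine Finset.sum_eq_zero fun t' _ => ?_
    haveI : NeZero (2 ^ (m - (j' : ℕ))) := ⟨by positivity⟩
    rw [hxne j' hne]
    simp
  have hinner : ∀ t' ∈ Finset.univ, t' ≠ t →
      (((x j t').val : ℤ)) • gen kv G w r0 hm hr0 j t' = 0 := by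
    intro t' _ hne
    haveI : NeZero (2 ^ (m - (j : ℕ))) := ⟨by positivity⟩
    rw [hxj, Pi.single_eq_of_ne hne]
    simp
  rw [(Finset.sum_eq_single_of_mem j (Finset.mem_univ _) houter).trans
    (Finset.sum_eq_single_of_mem t (Finset.mem_univ _) hinner)]
  rw [hxj, Pi.single_eq_same]
  haveI : Fact (1 < 2 ^ (m - (j : ℕ))) := ⟨by
    have hj := j.2
    have hne : m - (j : ℕ) ≠ 0 := by omega
    exact Nat.one_lt_two_pow hne⟩
  rw [ZMod.val_one, Nat.cast_one, one_smul]

end main5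
end Doubling

open Doubling in
theorem doubling_type {m n : ℕ} (hm : 2 ≤ m) (kv : Fin m → ℕ)
    (G : Fin (psum kv m) → Fin n → ZMod (2 ^ m)) (hSF : StandardForm kv G)
    (C : AddSubgroup (Fin n → ZMod (2 ^ m)))
    (hgen : C = AddSubgroup.closure (Set.range G))
    (hsd : IsSelfDual C) (hT2 : ∀ x ∈ C, 2 ^ (m + 1) ∣ euclWt x)
    (w : Fin n → ZMod (2 ^ m)) (hwC : w ∉ C)
    (hcoord : ∀ i, w i = 0 ∨ w i = (2 ^ (m - 1) : ZMod (2 ^ m)))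
    (hzero : ∀ i : Fin n, (i : ℕ) < psum kv m → w i = 0)
    (hpar : m = 2 → 2 ∣ cntEq (2 ^ (m - 1) : ZMod (2 ^ m)) w) :
    Nonempty ((evenPart C w ⊔ AddSubgroup.closure {w} :
        AddSubgroup (Fin n → ZMod (2 ^ m))) ≃+
      ∀ j : Fin m,
        Fin (kv j - (if (j : ℕ) = 0 then 1 else 0) + (if (j : ℕ) = 1 then 1 else 0)
          + (if (j : ℕ) = m - 1 then 1 else 0)) → ZMod (2 ^ (m - (j : ℕ)))) := by
  classical
  subst hgen
  have h0m : 0 < m := by omega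
  have hwne : w ≠ 0 := fun h => hwC (by rw [h]; exact AddSubgroup.zero_mem _)
  -- choose a block-0 row pairing nontrivially with w
  have hex : ∃ (t : ℕ) (ht : t < extk kv 0),
      innerZ w (G (rowIdxN kv 0 t h0m ht)) ≠ 0 := by
    by_contra hno
    push_neg at hno
    have hall : ∀ r : Fin (psum kv m), innerZ w (G r) = 0 := by
      intro r
      obtain ⟨l, t, ht, rfl⟩ := row_decomp kv r
      by_cases hl : (l : ℕ) = 0
      · have e : l = ⟨0, h0m⟩ := Fin.ext hl
        subst e
        exact hno t ht
      · exact inner_row_pos kv G w hcoord hSF hm l.2 ht (by omega)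
    apply hwC
    rw [hsd w]
    intro y hy
    obtain ⟨d, rfl⟩ := (mem_closure_range_iff G y).mp hy
    rw [inner_sum w]
    refine Finset.sum_eq_zero fun r _ => ?_
    rw [inner_zsmul w, hall r, smul_zero]
  obtain ⟨r0, hr0, hphi⟩ := hex
  -- injectivity of Theta
  have hinj : Function.Injective (Theta kv G w r0 hm hr0 hSF hcoord) := by
    rw [injective_iff_map_eq_zero]
    intro x hx0
    have hc0 : ∑ j, ∑ t, (((x j t).val : ℤ)) • gen kv G w r0 hm hr0 j t = 0 := hx0
    have hdvd := key_div kv G w r0 hm hr0 hSF hcoord hzero hwne _ hc0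
    funext j t
    haveI : NeZero (2 ^ (m - (j : ℕ))) := ⟨by positivity⟩
    have h1 : ((2 ^ (m - (j : ℕ)) : ℕ) : ℤ) ∣ ((x j t).val : ℤ) := by
      have h := hdvd j t
      push_cast
      exact h
    have h2 : (2 ^ (m - (j : ℕ)) : ℕ) ∣ (x j t).val := Int.natCast_dvd_natCast.mp h1
    have h3 : (x j t).val = 0 := Nat.eq_zero_of_dvd_of_lt h2 (ZMod.val_lt _)
    show x j t = 0
    exact (ZMod.val_eq_zero _).mp h3
  -- the chosen row
  have hphiB : innerZ w (G (rowIdxN kv 0 r0 h0m hr0)) = 2 ^ (m - 1) :=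
    (inner_two_cases w hcoord hm _).resolve_left hphi
  -- special indices
  have hj1lt : 1 < m := by omega
  have hj1ne : ((⟨1, hj1lt⟩ : Fin m) : ℕ) ≠ 0 := by
    have h : ((⟨1, hj1lt⟩ : Fin m) : ℕ) = 1 := rfl
    omega
  have hsz1 : kv (⟨1, hj1lt⟩ : Fin m) < sz kv (⟨1, hj1lt⟩ : Fin m) := by
    have hsz := sz_pos' kv (⟨1, hj1lt⟩ : Fin m) hj1ne
    have h1 : ((⟨1, hj1lt⟩ : Fin m) : ℕ) = 1 := rfl
    rw [if_pos h1] at hsz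
    by_cases h2 : ((⟨1, hj1lt⟩ : Fin m) : ℕ) = m - 1
    · rw [if_pos h2] at hsz; omega
    · rw [if_neg h2] at hsz; omega
  have hnt1 : ¬(((⟨kv (⟨1, hj1lt⟩ : Fin m), hsz1⟩ : Fin (sz kv (⟨1, hj1lt⟩ : Fin m))) : ℕ)
      < extk kv ((⟨1, hj1lt⟩ : Fin m) : ℕ)) := by
    have hext := extk_coe kv (⟨1, hj1lt⟩ : Fin m)
    have hv : ((⟨kv (⟨1, hj1lt⟩ : Fin m), hsz1⟩ : Fin (sz kv (⟨1, hj1lt⟩ : Fin m))) : ℕ)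
        = kv (⟨1, hj1lt⟩ : Fin m) := rfl
    omega
  have hgextra : gen kv G w r0 hm hr0 (⟨1, hj1lt⟩ : Fin m) ⟨kv (⟨1, hj1lt⟩ : Fin m), hsz1⟩
      = (2 : ℤ) • G (rowIdxN kv 0 r0 h0m hr0) :=
    gen_def_extra kv G w r0 hm hr0 _ hj1ne _ hnt1 ⟨(extk_coe kv _).symm, rfl⟩
  -- the w index
  have hjwlt : m - 1 < m := by omega
  have h0w : ((⟨m - 1, hjwlt⟩ : Fin m) : ℕ) ≠ 0 := by
    have : ((⟨m - 1, hjwlt⟩ : Fin m) : ℕ) = m - 1 := rfl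
    omega
  have hszeq := sz_pos' kv (⟨m - 1, hjwlt⟩ : Fin m) h0w
  have hextw : extk kv ((⟨m - 1, hjwlt⟩ : Fin m) : ℕ) = kv (⟨m - 1, hjwlt⟩ : Fin m) :=
    extk_coe kv (⟨m - 1, hjwlt⟩ : Fin m)
  have hjw : ((⟨m - 1, hjwlt⟩ : Fin m) : ℕ) = m - 1 := rfl
  rw [if_pos hjw] at hszeq
  have hszpos : 0 < sz kv (⟨m - 1, hjwlt⟩ : Fin m) := by
    by_cases h1w : ((⟨m - 1, hjwlt⟩ : Fin m) : ℕ) = 1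
    · rw [if_pos h1w] at hszeq; omega
    · rw [if_neg h1w] at hszeq; omega
  have hszw : sz kv (⟨m - 1, hjwlt⟩ : Fin m) - 1 < sz kv (⟨m - 1, hjwlt⟩ : Fin m) := by
    omega
  have htwv : ((⟨_, hszw⟩ : Fin (sz kv (⟨m - 1, hjwlt⟩ : Fin m))) : ℕ)
      = sz kv (⟨m - 1, hjwlt⟩ : Fin m) - 1 := rfl
  have htwnotlt : ¬(((⟨_, hszw⟩ : Fin (sz kv (⟨m - 1, hjwlt⟩ : Fin m))) : ℕ)
      < extk kv ((⟨m - 1, hjwlt⟩ : Fin m) : ℕ)) := by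
    by_cases h1w : ((⟨m - 1, hjwlt⟩ : Fin m) : ℕ) = 1
    · rw [if_pos h1w] at hszeq; omega
    · rw [if_neg h1w] at hszeq; omega
  have htwpair : ¬(((⟨_, hszw⟩ : Fin (sz kv (⟨m - 1, hjwlt⟩ : Fin m))) : ℕ)
      = extk kv ((⟨m - 1, hjwlt⟩ : Fin m) : ℕ)
      ∧ ((⟨m - 1, hjwlt⟩ : Fin m) : ℕ) = 1) := by
    rintro ⟨hh1, hh2⟩
    rw [if_pos hh2] at hszeq
    omega
  have hgw : gen kv G w r0 hm hr0 (⟨m - 1, hjwlt⟩ : Fin m) ⟨_, hszw⟩ = w :=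
    gen_def_w kv G w r0 hm hr0 _ h0w _ htwnotlt htwpair
  -- phi vanishes on the range of Theta
  have hphirange : ∀ u ∈ (Theta kv G w r0 hm hr0 hSF hcoord).range, innerZ w u = 0 := by
    rintro u ⟨x, rfl⟩
    have hTh : Theta kv G w r0 hm hr0 hSF hcoord x
        = ∑ j, ∑ t, (((x j t).val : ℤ)) • gen kv G w r0 hm hr0 j t := rfl
    rw [hTh, inner_sum w]
    refine Finset.sum_eq_zero fun j _ => ?_
    rw [inner_sum w]
    refine Finset.sum_eq_zero fun t _ => ?_
    rw [inner_zsmul w, inner_gen_zero kv G w r0 hcoord hSF hm hr0 hphi j t, smul_zero]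
  -- range of Theta is contained in the doubled code
  have hle1 : (Theta kv G w r0 hm hr0 hSF hcoord).range
      ≤ evenPart (AddSubgroup.closure (Set.range G)) w ⊔ AddSubgroup.closure {w} := by
    rintro u ⟨x, rfl⟩
    have hTh : Theta kv G w r0 hm hr0 hSF hcoord x
        = ∑ j, ∑ t, (((x j t).val : ℤ)) • gen kv G w r0 hm hr0 j t := rfl
    rw [hTh]
    refine sum_mem fun j _ => sum_mem fun t _ => AddSubgroup.zsmul_mem _ ?_ _
    by_cases h0 : (j : ℕ) = 0
    · apply AddSubgroup.mem_sup_left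
      refine ⟨?_, inner_gen_zero kv G w r0 hcoord hSF hm hr0 hphi j t⟩
      rw [gen_def0 kv G w r0 hm hr0 j h0 t (emb_lt kv r0 hm j h0 t)]
      exact AddSubgroup.sub_mem _
        (AddSubgroup.subset_closure (Set.mem_range_self _))
        (AddSubgroup.zsmul_mem _ (AddSubgroup.subset_closure (Set.mem_range_self _)) _)
    · by_cases ht : (t : ℕ) < extk kv (j : ℕ)
      · apply AddSubgroup.mem_sup_left
        refine ⟨?_, inner_gen_zero kv G w r0 hcoord hSF hm hr0 hphi j t⟩
        rw [gen_def_row kv G w r0 hm hr0 j h0 t ht]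
        exact AddSubgroup.subset_closure (Set.mem_range_self _)
      · by_cases h1 : (t : ℕ) = extk kv (j : ℕ) ∧ (j : ℕ) = 1
        · apply AddSubgroup.mem_sup_left
          refine ⟨?_, inner_gen_zero kv G w r0 hcoord hSF hm hr0 hphi j t⟩
          rw [gen_def_extra kv G w r0 hm hr0 j h0 t ht h1]
          exact AddSubgroup.zsmul_mem _
            (AddSubgroup.subset_closure (Set.mem_range_self _)) _
        · rw [gen_def_w kv G w r0 hm hr0 j h0 t ht h1]
          exact AddSubgroup.mem_sup_right (AddSubgroup.subset_closure rfl)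
  -- each row of G lies in range(Theta) + Z * (chosen row)
  have hrows : ∀ r : Fin (psum kv m), G r ∈ (Theta kv G w r0 hm hr0 hSF hcoord).range
      ⊔ AddSubgroup.zmultiples (G (rowIdxN kv 0 r0 h0m hr0)) := by
    intro r
    obtain ⟨l, t, ht, rfl⟩ := row_decomp kv r
    by_cases hl : (l : ℕ) = 0
    · have e : l = ⟨0, h0m⟩ := Fin.ext hl
      subst e
      by_cases hteq : t = r0
      · subst hteq
        exact AddSubgroup.mem_sup_right (AddSubgroup.mem_zmultiples _)
      · have htlt : t < extk kv 0 := ht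
        have hb : (if t < r0 then t else t - 1) < sz kv (⟨0, h0m⟩ : Fin m) := by
          have hsz := sz_zero kv hm (⟨0, h0m⟩ : Fin m) rfl
          have hext : extk kv ((⟨0, h0m⟩ : Fin m) : ℕ) = kv (⟨0, h0m⟩ : Fin m) :=
            extk_coe kv _
          have hbridge : extk kv ((⟨0, h0m⟩ : Fin m) : ℕ) = extk kv 0 := rfl
          split <;> omega
        have hcoe : ((⟨_, hb⟩ : Fin (sz kv (⟨0, h0m⟩ : Fin m))) : ℕ)
            = if t < r0 then t else t - 1 := rfl
        have hemb : (if ((⟨_, hb⟩ : Fin (sz kv (⟨0, h0m⟩ : Fin m))) : ℕ) < r0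
            then ((⟨_, hb⟩ : Fin (sz kv (⟨0, h0m⟩ : Fin m))) : ℕ)
            else ((⟨_, hb⟩ : Fin (sz kv (⟨0, h0m⟩ : Fin m))) : ℕ) + 1) = t := by
          rw [hcoe]
          split_ifs <;> omega
        have hs' := emb_lt kv r0 hm (⟨0, h0m⟩ : Fin m) rfl (⟨_, hb⟩ : Fin (sz kv (⟨0, h0m⟩ : Fin m)))
        have hidx : rowIdxN kv 0 _ (by omega : (0:ℕ) < m) hs' = rowIdxN kv 0 t h0m htlt := by
          apply Fin.ext
          show psum kv 0 + _ = psum kv 0 + t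
          omega
        have hgen0 := gen_def0 kv G w r0 hm hr0 (⟨0, h0m⟩ : Fin m) rfl ⟨_, hb⟩ hs'
        rw [hidx] at hgen0
        have hsplit : G (rowIdxN kv 0 t h0m htlt)
            = gen kv G w r0 hm hr0 (⟨0, h0m⟩ : Fin m) ⟨_, hb⟩
              + eps kv G w (by omega)
                (if ((⟨_, hb⟩ : Fin (sz kv (⟨0, h0m⟩ : Fin m))) : ℕ) < r0
                  then ((⟨_, hb⟩ : Fin (sz kv (⟨0, h0m⟩ : Fin m))) : ℕ)
                  else ((⟨_, hb⟩ : Fin (sz kv (⟨0, h0m⟩ : Fin m))) : ℕ) + 1)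
                • G (rowIdxN kv 0 r0 (by omega) hr0) := by
          rw [hgen0]
          abel
        show G (rowIdxN kv 0 t h0m htlt) ∈ _
        rw [hsplit]
        exact AddSubgroup.add_mem _
          (AddSubgroup.mem_sup_left (gen_mem_range kv G w r0 hm hr0 hSF hcoord _ _))
          (AddSubgroup.mem_sup_right
            (AddSubgroup.zsmul_mem _ (AddSubgroup.mem_zmultiples _) _))
    · have hszl := sz_pos' kv l hl
      have hext := extk_coe kv l
      have hb : t < sz kv l := by split_ifs at hszl <;> omega
      have hgenr := gen_def_row kv G w r0 hm hr0 l hl ⟨t, hb⟩ ht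
      have hmem := gen_mem_range kv G w r0 hm hr0 hSF hcoord l ⟨t, hb⟩
      rw [hgenr] at hmem
      exact AddSubgroup.mem_sup_left hmem
  -- the doubled code is contained in range(Theta)
  have hle2 : evenPart (AddSubgroup.closure (Set.range G)) w ⊔ AddSubgroup.closure {w}
      ≤ (Theta kv G w r0 hm hr0 hSF hcoord).range := by
    refine sup_le ?_ ?_
    · rintro v hv
      obtain ⟨hvC, hv0⟩ := hv
      obtain ⟨d, rfl⟩ := (mem_closure_range_iff G v).mp hvC
      have hvsup : (∑ r, d r • G r) ∈ (Theta kv G w r0 hm hr0 hSF hcoord).range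
          ⊔ AddSubgroup.zmultiples (G (rowIdxN kv 0 r0 h0m hr0)) :=
        sum_mem fun r _ => AddSubgroup.zsmul_mem _ (hrows r) _
      rw [AddSubgroup.mem_sup] at hvsup
      obtain ⟨u, hu, z, hz, hsum⟩ := hvsup
      obtain ⟨k, hk⟩ := AddSubgroup.mem_zmultiples_iff.mp hz
      have h1 : innerZ w (u + z) = 0 := by rw [hsum]; exact hv0
      rw [inner_add w u z, hphirange u hu, zero_add, ← hk, inner_zsmul w, hphiB] at h1
      have hk2 : (2 : ℤ) ∣ k := by
        have h := coeff_dvd (show m - 1 ≤ m by omega) h1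
        rwa [show m - (m - 1) = 1 by omega, pow_one] at h
      obtain ⟨k', rfl⟩ := hk2
      have h2B : (2 : ℤ) • G (rowIdxN kv 0 r0 h0m hr0)
          ∈ (Theta kv G w r0 hm hr0 hSF hcoord).range := by
        have hmem := gen_mem_range kv G w r0 hm hr0 hSF hcoord
          (⟨1, hj1lt⟩ : Fin m) ⟨kv (⟨1, hj1lt⟩ : Fin m), hsz1⟩
        rw [hgextra] at hmem
        exact hmem
      have hzmem : z ∈ (Theta kv G w r0 hm hr0 hSF hcoord).range := by
        have hzeq : z = k' • ((2 : ℤ) • G (rowIdxN kv 0 r0 h0m hr0)) := by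
          rw [← hk, mul_comm, mul_smul]
        rw [hzeq]
        exact AddSubgroup.zsmul_mem _ h2B _
      rw [← hsum]
      exact AddSubgroup.add_mem _ hu hzmem
    · rw [AddSubgroup.closure_le, Set.singleton_subset_iff]
      have hmem := gen_mem_range kv G w r0 hm hr0 hSF hcoord (⟨m - 1, hjwlt⟩ : Fin m) ⟨_, hszw⟩
      rw [hgw] at hmem
      exact hmem
  have hEq : (Theta kv G w r0 hm hr0 hSF hcoord).range
      = evenPart (AddSubgroup.closure (Set.range G)) w ⊔ AddSubgroup.closure {w} :=
    le_antisymm hle1 hle2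
  exact ⟨((AddMonoidHom.ofInjective hinj).trans (AddEquiv.addSubgroupCongr hEq)).symm⟩
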